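/- Let d ≥ 1, let Δ be a d-dimensional simplicial complex on n vertices with H̃_d(Δ; K) ≠ 0, and set J = I_Δ + (x_1^{d+2},...,x_n^{d+2}) and L = x_1 + ... + x_n. Then the multiplication map ×L : (R/J)_{C(d+2,2)−1} → (R/J)_{C(d+2,2)} is not surjective. -/

import Mathlib

open MvPolynomial Finset Equiv

/-- The Stanley–Reisner ideal of a simplicial complex `Δ` on vertex set `Fin n`. -/
noncomputable def SRIdeal (K : Type*) [Field K] (n : ℕ) (Δ : Finset (Finset (Fin n))) :
    Ideal (MvPolynomial (Fin n) K) :=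
  Ideal.span {p | ∃ τ : Finset (Fin n), τ ∉ Δ ∧ p = ∏ j ∈ τ, X j}

/-- The degree-`t` graded piece of `R/J`: the image in `R/J` of the homogeneous
polynomials of degree `t`. -/
noncomputable def quotPiece (K : Type*) [Field K] {n : ℕ}
    (J : Ideal (MvPolynomial (Fin n) K)) (t : ℕ) :
    Submodule K (MvPolynomial (Fin n) K ⧸ J) :=
  Submodule.map (Ideal.Quotient.mkₐ K J).toLinearMap (homogeneousSubmodule (Fin n) K t)

/-- The coefficient of `τ` in the simplicial boundary of `F`. -/
def bdryCoeff {n : ℕ} (F τ : Finset (Fin n)) : ℤ :=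
  if τ ⊆ F then ∑ v ∈ F \ τ, (-1) ^ ((F.filter fun w => w < v).card) else 0

namespace Stmt15

variable {K : Type*} [Field K] {n d : ℕ}

noncomputable def sgn (K : Type*) [Field K] {m : ℕ} (π : Equiv.Perm (Fin m)) : K :=
  ((Equiv.Perm.sign π : ℤ) : K)

lemma sgn_mul {m : ℕ} (π ω : Equiv.Perm (Fin m)) : sgn K (π * ω) = sgn K π * sgn K ω := by
  simp [sgn]

lemma sgn_one {m : ℕ} : sgn K (1 : Equiv.Perm (Fin m)) = 1 := by simp [sgn]

noncomputable def expA (σ : Finset (Fin n)) (hσ : σ.card = d + 1)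
    (π : Equiv.Perm (Fin (d + 1))) : Fin n →₀ ℕ :=
  ∑ i : Fin (d + 1), Finsupp.single (σ.orderEmbOfFin hσ i) ((π i : ℕ) + 1)

noncomputable def expB (σ : Finset (Fin n)) (hσ : σ.card = d + 1) (k : Fin (d + 1))
    (π : Equiv.Perm (Fin (d + 1))) : Fin n →₀ ℕ :=
  Finsupp.single (σ.orderEmbOfFin hσ k) ((π k : ℕ)) +
    ∑ j : Fin d, Finsupp.single (σ.orderEmbOfFin hσ (k.succAbove j)) ((π (k.succAbove j) : ℕ) + 1)

noncomputable def expC (τ : Finset (Fin n)) (hτ : τ.card = d) (ρ : Equiv.Perm (Fin d)) :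
    Fin n →₀ ℕ :=
  ∑ j : Fin d, Finsupp.single (τ.orderEmbOfFin hτ j) ((ρ j : ℕ) + 2)

lemma expA_apply_mem (σ : Finset (Fin n)) (hσ : σ.card = d + 1) (π : Equiv.Perm (Fin (d + 1)))
    (i : Fin (d + 1)) : expA σ hσ π (σ.orderEmbOfFin hσ i) = (π i : ℕ) + 1 := by
  classical
  rw [expA, Finset.sum_apply']
  rw [Finset.sum_eq_single i]
  · simp
  · intro j _ hj
    rw [Finsupp.single_apply, if_neg]
    exact fun h => hj ((σ.orderEmbOfFin hσ).injective h)
  · simp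

lemma expA_apply_not_mem (σ : Finset (Fin n)) (hσ : σ.card = d + 1)
    (π : Equiv.Perm (Fin (d + 1))) {w : Fin n} (hw : w ∉ σ) : expA σ hσ π w = 0 := by
  classical
  rw [expA, Finset.sum_apply']
  apply Finset.sum_eq_zero
  intro j _
  rw [Finsupp.single_apply, if_neg]
  exact fun h => hw (h ▸ Finset.orderEmbOfFin_mem σ hσ j)

lemma mem_iff_expA_ne (σ : Finset (Fin n)) (hσ : σ.card = d + 1)
    (π : Equiv.Perm (Fin (d + 1))) (w : Fin n) : w ∈ σ ↔ expA σ hσ π w ≠ 0 := by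
  constructor
  · intro hw
    obtain ⟨i, rfl⟩ : ∃ i, σ.orderEmbOfFin hσ i = w := by
      have := Finset.range_orderEmbOfFin σ hσ
      have hw' : w ∈ (↑σ : Set (Fin n)) := hw
      rw [← this] at hw'
      exact hw'
    rw [expA_apply_mem]
    omega
  · intro h
    by_contra hw
    exact h (expA_apply_not_mem σ hσ π hw)

lemma expA_le (σ : Finset (Fin n)) (hσ : σ.card = d + 1) (π : Equiv.Perm (Fin (d + 1)))
    (w : Fin n) : expA σ hσ π w ≤ d + 1 := by
  by_cases hw : w ∈ σ
  · obtain ⟨i, rfl⟩ : ∃ i, σ.orderEmbOfFin hσ i = w := by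
      have := Finset.range_orderEmbOfFin σ hσ
      have hw' : w ∈ (↑σ : Set (Fin n)) := hw
      rw [← this] at hw'
      exact hw'
    rw [expA_apply_mem]
    have := (π i).isLt
    omega
  · rw [expA_apply_not_mem σ hσ π hw]
    omega

lemma expA_eq_expB_add (σ : Finset (Fin n)) (hσ : σ.card = d + 1) (k : Fin (d + 1))
    (π : Equiv.Perm (Fin (d + 1))) :
    expA σ hσ π = expB σ hσ k π + Finsupp.single (σ.orderEmbOfFin hσ k) 1 := by
  rw [expA, Fin.sum_univ_succAbove _ k, expB]
  have : Finsupp.single (σ.orderEmbOfFin hσ k) ((π k : ℕ) + 1)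
      = Finsupp.single (σ.orderEmbOfFin hσ k) ((π k : ℕ))
        + Finsupp.single (σ.orderEmbOfFin hσ k) 1 := by
    rw [← Finsupp.single_add]
  rw [this]
  abel

noncomputable def phi (Δ : Finset (Finset (Fin n)))
    (c : {σ // σ ∈ Δ.filter fun σ => σ.card = d + 1} → K) :
    MvPolynomial (Fin n) K →ₗ[K] K :=
  ∑ σ : {σ // σ ∈ Δ.filter fun σ => σ.card = d + 1}, ∑ π : Equiv.Perm (Fin (d + 1)),
    (c σ * sgn K π) • lcoeff K (expA σ.1 (Finset.mem_filter.mp σ.2).2 π)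

lemma phi_apply (Δ : Finset (Finset (Fin n))) (c) (p : MvPolynomial (Fin n) K) :
    phi Δ c p = ∑ σ : {σ // σ ∈ Δ.filter fun σ => σ.card = d + 1},
      ∑ π : Equiv.Perm (Fin (d + 1)),
        (c σ * sgn K π) * coeff (expA σ.1 (Finset.mem_filter.mp σ.2).2 π) p := by
  simp [phi, LinearMap.sum_apply, lcoeff_apply, smul_eq_mul]

lemma phi_monomial (Δ : Finset (Finset (Fin n))) (c)
    (σ₀ : {σ // σ ∈ Δ.filter fun σ => σ.card = d + 1}) :
    phi Δ c (monomial (expA σ₀.1 (Finset.mem_filter.mp σ₀.2).2 (1 : Equiv.Perm (Fin (d+1)))) (1:K))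
      = c σ₀ := by
  classical
  rw [phi_apply]
  rw [Finset.sum_eq_single σ₀]
  · rw [Finset.sum_eq_single (1 : Equiv.Perm (Fin (d+1)))]
    · rw [coeff_monomial, if_pos rfl, sgn_one]
      ring
    · intro π _ hπ
      rw [coeff_monomial, if_neg, mul_zero]
      intro h
      apply hπ
      refine Equiv.ext fun i => ?_
      have h2 := congrArg (fun f : Fin n →₀ ℕ => f (σ₀.1.orderEmbOfFin (Finset.mem_filter.mp σ₀.2).2 i)) h
      simp only [expA_apply_mem] at h2
      exact Fin.ext (by omega)
    · simp
  · intro σ _ hσ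
    apply Finset.sum_eq_zero
    intro π _
    rw [coeff_monomial, if_neg, mul_zero]
    intro h
    apply hσ
    have hset : σ.1 = σ₀.1 := by
      ext w
      rw [mem_iff_expA_ne σ.1 (Finset.mem_filter.mp σ.2).2 π w, ← h,
        ← mem_iff_expA_ne σ₀.1 (Finset.mem_filter.mp σ₀.2).2 1 w]
    exact Subtype.ext hset
  · simp

lemma prod_X_eq_monomial (τ : Finset (Fin n)) :
    (∏ j ∈ τ, (X j : MvPolynomial (Fin n) K)) = monomial (∑ j ∈ τ, Finsupp.single j 1) 1 := by
  classical
  induction τ using Finset.induction with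
  | empty => simp
  | insert a s h ih =>
    rw [Finset.prod_insert h, Finset.sum_insert h, ih, ← pow_one (X _), X_pow_eq_monomial,
      monomial_mul, one_mul]

lemma sum_single_one_apply (τ : Finset (Fin n)) (w : Fin n) :
    (∑ j ∈ τ, Finsupp.single j (1 : ℕ)) w = if w ∈ τ then 1 else 0 := by
  classical
  rw [Finset.sum_apply']
  simp [Finsupp.single_apply, Finset.sum_ite_eq' τ w]

lemma phi_gen (Δ : Finset (Finset (Fin n))) (c : {σ // σ ∈ Δ.filter fun σ => σ.card = d + 1} → K) (hdown : ∀ σ ∈ Δ, ∀ τ ⊆ σ, τ ∈ Δ) :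
    ∀ g ∈ ({p | ∃ τ : Finset (Fin n), τ ∉ Δ ∧ p = ∏ j ∈ τ, X j} ∪
      Set.range fun i : Fin n => (X i : MvPolynomial (Fin n) K) ^ (d + 2)),
      ∀ r : MvPolynomial (Fin n) K, phi Δ c (r * g) = 0 := by
  classical
  intro g hg r
  rw [phi_apply]
  apply Finset.sum_eq_zero
  intro σ _
  apply Finset.sum_eq_zero
  intro π _
  suffices h : coeff (expA σ.1 (Finset.mem_filter.mp σ.2).2 π) (r * g) = 0 by
    rw [h, mul_zero]
  rcases hg with ⟨τ, hτ, rfl⟩ | ⟨i, rfl⟩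
  · rw [prod_X_eq_monomial, coeff_mul_monomial', if_neg]
    intro hle
    apply hτ
    apply hdown σ.1 (Finset.mem_filter.mp σ.2).1
    intro j hj
    have h1 := hle j
    rw [sum_single_one_apply, if_pos hj] at h1
    rw [mem_iff_expA_ne σ.1 (Finset.mem_filter.mp σ.2).2 π j]
    omega
  · simp only []
    rw [X_pow_eq_monomial, coeff_mul_monomial', if_neg]
    intro hle
    have h1 := hle i
    rw [Finsupp.single_eq_same] at h1
    have h2 := expA_le σ.1 (Finset.mem_filter.mp σ.2).2 π i
    omega

lemma phi_ideal (Δ : Finset (Finset (Fin n))) (c : {σ // σ ∈ Δ.filter fun σ => σ.card = d + 1} → K) (hdown : ∀ σ ∈ Δ, ∀ τ ⊆ σ, τ ∈ Δ)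
    {p : MvPolynomial (Fin n) K}
    (hp : p ∈ SRIdeal K n Δ ⊔
      Ideal.span (Set.range fun i : Fin n => (X i : MvPolynomial (Fin n) K) ^ (d + 2))) :
    phi Δ c p = 0 := by
  rw [SRIdeal, ← Ideal.span_union] at hp
  obtain ⟨f, hsupp, rfl⟩ := Submodule.mem_span_set.mp hp
  rw [Finsupp.sum, map_sum]
  apply Finset.sum_eq_zero
  intro g hg
  rw [smul_eq_mul]
  exact phi_gen Δ c hdown g (hsupp hg) (f g)

/-! ### The lift of a permutation of `Fin d` -/

noncomputable def lift (k : Fin (d + 1)) (ρ : Equiv.Perm (Fin d)) : Equiv.Perm (Fin (d + 1)) :=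
  Equiv.Perm.decomposeFin.symm (0, ρ) * k.cycleRange

lemma lift_apply_self (k : Fin (d + 1)) (ρ : Equiv.Perm (Fin d)) : lift k ρ k = 0 := by
  rw [lift, Equiv.Perm.mul_apply, Fin.cycleRange_self, Equiv.Perm.decomposeFin_symm_apply_zero]

lemma lift_apply_succAbove (k : Fin (d + 1)) (ρ : Equiv.Perm (Fin d)) (j : Fin d) :
    lift k ρ (k.succAbove j) = (ρ j).succ := by
  rw [lift, Equiv.Perm.mul_apply, Fin.cycleRange_succAbove,
    Equiv.Perm.decomposeFin_symm_apply_succ, Equiv.swap_self, Equiv.refl_apply]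

lemma sgn_lift (k : Fin (d + 1)) (ρ : Equiv.Perm (Fin d)) :
    sgn K (lift k ρ) = (-1) ^ (k : ℕ) * sgn K ρ := by
  rw [lift, sgn, map_mul, Equiv.Perm.decomposeFin.symm_sign, Fin.sign_cycleRange, if_pos rfl,
    one_mul, sgn]
  push_cast
  ring

lemma lift_inv (k : Fin (d + 1)) (π : Equiv.Perm (Fin (d + 1))) (hπ : π k = 0) :
    lift k (Equiv.Perm.decomposeFin (π * (k.cycleRange)⁻¹)).2 = π := by
  set P := π * (k.cycleRange)⁻¹ with hP
  have h0 : P 0 = 0 := by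
    rw [hP, Equiv.Perm.mul_apply]
    have : (k.cycleRange)⁻¹ 0 = k := by
      rw [Equiv.Perm.inv_eq_iff_eq]
      exact (Fin.cycleRange_self k).symm
    rw [this, hπ]
  have hfst : (Equiv.Perm.decomposeFin P).1 = 0 := by
    have h1 : Equiv.Perm.decomposeFin.symm (Equiv.Perm.decomposeFin P) = P :=
      Equiv.symm_apply_apply _ _
    have h2 := Equiv.Perm.decomposeFin_symm_apply_zero (Equiv.Perm.decomposeFin P).1
      (Equiv.Perm.decomposeFin P).2
    rw [show ((Equiv.Perm.decomposeFin P).1, (Equiv.Perm.decomposeFin P).2)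
        = Equiv.Perm.decomposeFin P from rfl, h1] at h2
    rw [← h2, h0]
  have : ((0 : Fin (d + 1)), (Equiv.Perm.decomposeFin P).2) = Equiv.Perm.decomposeFin P := by
    rw [← hfst]
  rw [lift, this, Equiv.symm_apply_apply, hP, inv_mul_cancel_right]

lemma lift_left_inv (k : Fin (d + 1)) (ρ : Equiv.Perm (Fin d)) :
    (Equiv.Perm.decomposeFin (lift k ρ * (k.cycleRange)⁻¹)).2 = ρ := by
  rw [lift, mul_inv_cancel_right, Equiv.apply_symm_apply]

/-! ### Order embedding of the erased set -/

lemma card_erase (σ : Finset (Fin n)) (hσ : σ.card = d + 1) (k : Fin (d + 1)) :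
    (σ.erase (σ.orderEmbOfFin hσ k)).card = d := by
  rw [Finset.card_erase_of_mem (Finset.orderEmbOfFin_mem σ hσ k), hσ]
  omega

lemma orderEmb_erase (σ : Finset (Fin n)) (hσ : σ.card = d + 1) (k : Fin (d + 1)) (j : Fin d) :
    (σ.erase (σ.orderEmbOfFin hσ k)).orderEmbOfFin (card_erase σ hσ k) j
      = σ.orderEmbOfFin hσ (k.succAbove j) := by
  have huniq := Finset.orderEmbOfFin_unique' (card_erase σ hσ k)
    (f := (k.succAboveOrderEmb).trans (σ.orderEmbOfFin hσ)) ?_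
  · rw [← huniq]
    rfl
  · intro i
    rw [Finset.mem_erase]
    constructor
    · exact fun h => (Fin.succAbove_ne k i) ((σ.orderEmbOfFin hσ).injective h)
    · exact Finset.orderEmbOfFin_mem σ hσ _

lemma expB_lift (σ : Finset (Fin n)) (hσ : σ.card = d + 1) (k : Fin (d + 1))
    (ρ : Equiv.Perm (Fin d)) :
    expB σ hσ k (lift k ρ) = expC (σ.erase (σ.orderEmbOfFin hσ k)) (card_erase σ hσ k) ρ := by
  rw [expB, lift_apply_self]
  simp only [Fin.val_zero, Finsupp.single_zero, zero_add]
  rw [expC]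
  apply Finset.sum_congr rfl
  intro j _
  rw [orderEmb_erase, lift_apply_succAbove, Fin.val_succ]

noncomputable def Gv (e : ℕ) (p : MvPolynomial (Fin n) K) (τ : Finset (Fin n)) : K :=
  if hτ : τ.card = e then
    ∑ ρ : Equiv.Perm (Fin e), sgn K ρ * coeff (expC τ hτ ρ) p else 0

lemma sumB (σ : Finset (Fin n)) (hσ : σ.card = d + 1) (k : Fin (d + 1))
    (p : MvPolynomial (Fin n) K) :
    ∑ π ∈ Finset.univ.filter (fun π : Equiv.Perm (Fin (d + 1)) => π k = 0),
      sgn K π * coeff (expB σ hσ k π) p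
    = (-1) ^ (k : ℕ) * Gv d p (σ.erase (σ.orderEmbOfFin hσ k)) := by
  classical
  rw [Gv, dif_pos (card_erase σ hσ k), Finset.mul_sum]
  refine Finset.sum_nbij' (fun π => (Equiv.Perm.decomposeFin (π * (k.cycleRange)⁻¹)).2)
    (fun ρ => lift k ρ) ?_ ?_ ?_ ?_ ?_
  · intro π _
    exact Finset.mem_univ _
  · intro ρ _
    rw [Finset.mem_filter]
    exact ⟨Finset.mem_univ _, lift_apply_self k ρ⟩
  · intro π hπ
    rw [Finset.mem_filter] at hπ
    exact lift_inv k π hπ.2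
  · intro ρ _
    exact lift_left_inv k ρ
  · intro π hπ
    rw [Finset.mem_filter] at hπ
    conv_lhs => rw [← lift_inv k π hπ.2]
    rw [sgn_lift, expB_lift]
    ring

noncomputable def pm1 (t : Fin (d + 1)) : Fin (d + 1) := ⟨t.val - 1, by omega⟩

lemma pm1_val (t : Fin (d + 1)) : ((pm1 t : Fin (d + 1)) : ℕ) = t.val - 1 := rfl

lemma expB_swap (σ : Finset (Fin n)) (hσ : σ.card = d + 1) (k : Fin (d + 1))
    (π : Equiv.Perm (Fin (d + 1))) (hk : π k ≠ 0) :
    expB σ hσ k π = expB σ hσ (π⁻¹ (pm1 (π k))) (π * Equiv.swap k (π⁻¹ (pm1 (π k)))) := by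
  classical
  set j := π⁻¹ (pm1 (π k)) with hj
  set π' := π * Equiv.swap k j with hπ'
  have hπj : π j = pm1 (π k) := Equiv.apply_symm_apply π _
  have hvk : (π k : ℕ) ≠ 0 := fun h => hk (Fin.ext (by simp only [Fin.val_zero]; omega))
  have hjk : j ≠ k := by
    intro h
    apply hk
    have h2 : π j = pm1 (π k) := hπj
    rw [h] at h2
    have h3 := congrArg Fin.val h2
    rw [pm1_val] at h3
    exact Fin.ext (by simp only [Fin.val_zero]; omega)
  have hπ'k : π' k = π j := by rw [hπ', Equiv.Perm.mul_apply, Equiv.swap_apply_left]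
  have hπ'j : π' j = π k := by rw [hπ', Equiv.Perm.mul_apply, Equiv.swap_apply_right]
  have hinj := (σ.orderEmbOfFin hσ).injective
  have addA : expA σ hσ π' + Finsupp.single (σ.orderEmbOfFin hσ k) 1
      = expA σ hσ π + Finsupp.single (σ.orderEmbOfFin hσ j) 1 := by
    ext w
    by_cases hw : w ∈ σ
    · obtain ⟨i, rfl⟩ : ∃ i, σ.orderEmbOfFin hσ i = w := by
        have hr := Finset.range_orderEmbOfFin σ hσ
        have hw' : w ∈ (↑σ : Set (Fin n)) := hw
        rw [← hr] at hw'
        exact hw'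
      rw [Finsupp.add_apply, Finsupp.add_apply, expA_apply_mem, expA_apply_mem,
        Finsupp.single_apply, Finsupp.single_apply]
      by_cases hik : i = k
      · subst hik
        rw [if_pos rfl, if_neg (fun h => hjk (hinj h)), hπ'k, hπj]
        have := pm1_val (π i)
        omega
      · by_cases hij : i = j
        · subst hij
          rw [if_neg (fun h => hjk (hinj h).symm), if_pos rfl, hπ'j, hπj]
          have := pm1_val (π k)
          omega
        · rw [if_neg (fun h => hik (hinj h).symm), if_neg (fun h => hij (hinj h).symm)]
          have : π' i = π i := by
            rw [hπ', Equiv.Perm.mul_apply, Equiv.swap_apply_of_ne_of_ne hik hij]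
          rw [this]
    · rw [Finsupp.add_apply, Finsupp.add_apply, expA_apply_not_mem σ hσ _ hw,
        expA_apply_not_mem σ hσ _ hw, Finsupp.single_apply, Finsupp.single_apply,
        if_neg (fun h => hw (by rw [← h]; exact Finset.orderEmbOfFin_mem σ hσ k)),
        if_neg (fun h => hw (by rw [← h]; exact Finset.orderEmbOfFin_mem σ hσ j))]
  have h1 : expB σ hσ j π' + Finsupp.single (σ.orderEmbOfFin hσ j) 1
        + Finsupp.single (σ.orderEmbOfFin hσ k) 1
      = expB σ hσ k π + Finsupp.single (σ.orderEmbOfFin hσ k) 1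
        + Finsupp.single (σ.orderEmbOfFin hσ j) 1 := by
    rw [← expA_eq_expB_add, ← expA_eq_expB_add, addA]
  have h2 : expB σ hσ j π'
        + (Finsupp.single (σ.orderEmbOfFin hσ j) 1 + Finsupp.single (σ.orderEmbOfFin hσ k) 1)
      = expB σ hσ k π
        + (Finsupp.single (σ.orderEmbOfFin hσ j) 1 + Finsupp.single (σ.orderEmbOfFin hσ k) 1) := by
    rw [← add_assoc, h1, add_assoc]
    congr 1
    exact add_comm _ _
  exact (add_right_cancel h2).symm

lemma sumA (σ : Finset (Fin n)) (hσ : σ.card = d + 1) (p : MvPolynomial (Fin n) K) :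
    ∑ q ∈ (Finset.univ ×ˢ Finset.univ).filter
        (fun q : Fin (d + 1) × Equiv.Perm (Fin (d + 1)) => ¬ q.2 q.1 = 0),
      sgn K q.2 * coeff (expB σ hσ q.1 q.2) p = 0 := by
  classical
  set S := (Finset.univ ×ˢ Finset.univ).filter
      (fun q : Fin (d + 1) × Equiv.Perm (Fin (d + 1)) => ¬ q.2 q.1 = 0) with hS
  set g : Fin (d + 1) × Equiv.Perm (Fin (d + 1)) → Fin (d + 1) × Equiv.Perm (Fin (d + 1)) :=
    fun q => (q.2⁻¹ (pm1 (q.2 q.1)), q.2 * Equiv.swap q.1 (q.2⁻¹ (pm1 (q.2 q.1)))) with hg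
  have hjk : ∀ (k : Fin (d + 1)) (π : Equiv.Perm (Fin (d + 1))), π k ≠ 0 →
      π⁻¹ (pm1 (π k)) ≠ k := by
    intro k π hk h
    apply hk
    have h2 : π (π⁻¹ (pm1 (π k))) = pm1 (π k) := Equiv.apply_symm_apply π _
    rw [h] at h2
    have h3 := congrArg Fin.val h2
    rw [pm1_val] at h3
    have hvk : (π k : ℕ) ≠ 0 := fun hh => hk (Fin.ext (by simp only [Fin.val_zero]; omega))
    exact Fin.ext (by simp only [Fin.val_zero]; omega)
  have hcancel : ∀ q ∈ S,
      (sgn K q.2 * coeff (expB σ hσ q.1 q.2) p)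
        + (sgn K (g q).2 * coeff (expB σ hσ (g q).1 (g q).2) p) = 0 := by
    rintro ⟨k, π⟩ hq
    rw [hS, Finset.mem_filter] at hq
    have hk : π k ≠ 0 := hq.2
    have hsw : sgn K (Equiv.swap k (π⁻¹ (pm1 (π k)))) = -1 := by
      rw [sgn, Equiv.Perm.sign_swap (Ne.symm (hjk k π hk))]
      simp
    show sgn K π * coeff (expB σ hσ k π) p
      + sgn K (π * Equiv.swap k (π⁻¹ (pm1 (π k)))) *
        coeff (expB σ hσ (π⁻¹ (pm1 (π k))) (π * Equiv.swap k (π⁻¹ (pm1 (π k))))) p = 0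
    rw [sgn_mul, hsw, ← expB_swap σ hσ k π hk]
    ring
  have hne : ∀ q ∈ S, g q ≠ q := by
    rintro ⟨k, π⟩ hq h
    rw [hS, Finset.mem_filter] at hq
    have h1 := congrArg Prod.fst h
    exact hjk k π hq.2 h1
  have hmem : ∀ q ∈ S, g q ∈ S := by
    rintro ⟨k, π⟩ hq
    rw [hS, Finset.mem_filter] at hq ⊢
    refine ⟨Finset.mem_product.mpr ⟨Finset.mem_univ (π⁻¹ (pm1 (π k))),
      Finset.mem_univ (π * Equiv.swap k (π⁻¹ (pm1 (π k))))⟩, ?_⟩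
    show (π * Equiv.swap k (π⁻¹ (pm1 (π k)))) (π⁻¹ (pm1 (π k))) ≠ 0
    rw [Equiv.Perm.mul_apply, Equiv.swap_apply_right]
    exact hq.2
  have hinv : ∀ q ∈ S, g (g q) = q := by
    rintro ⟨k, π⟩ hq
    rw [hS, Finset.mem_filter] at hq
    have hj : (π * Equiv.swap k (π⁻¹ (pm1 (π k)))) (π⁻¹ (pm1 (π k))) = π k := by
      rw [Equiv.Perm.mul_apply, Equiv.swap_apply_right]
    have hfst : (π * Equiv.swap k (π⁻¹ (pm1 (π k))))⁻¹ (pm1 (π k)) = k := by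
      rw [Equiv.Perm.inv_eq_iff_eq, Equiv.Perm.mul_apply, Equiv.swap_apply_left,
        Equiv.Perm.inv_def, Equiv.apply_symm_apply]
    show ((π * Equiv.swap k (π⁻¹ (pm1 (π k))))⁻¹
        (pm1 ((π * Equiv.swap k (π⁻¹ (pm1 (π k)))) (π⁻¹ (pm1 (π k))))),
      (π * Equiv.swap k (π⁻¹ (pm1 (π k)))) * Equiv.swap (π⁻¹ (pm1 (π k)))
        ((π * Equiv.swap k (π⁻¹ (pm1 (π k))))⁻¹
          (pm1 ((π * Equiv.swap k (π⁻¹ (pm1 (π k)))) (π⁻¹ (pm1 (π k))))))) = (k, π)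
    rw [hj, hfst, Prod.mk.injEq]
    refine ⟨rfl, ?_⟩
    rw [Equiv.swap_comm (π⁻¹ (pm1 (π k))) k, mul_assoc, Equiv.swap_mul_self, mul_one]
  exact Finset.sum_involution (fun q _ => g q) (fun q hq => hcancel q hq)
    (fun q hq _ => hne q hq) (fun q hq => hmem q hq) (fun q hq => hinv q hq)

lemma image_orderEmb (σ : Finset (Fin n)) (hσ : σ.card = d + 1) :
    Finset.image (σ.orderEmbOfFin hσ) Finset.univ = σ := by
  ext w
  simp only [Finset.mem_image, Finset.mem_univ, true_and]
  rw [← Finset.mem_coe, ← Finset.range_orderEmbOfFin σ hσ]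
  exact ⟨fun ⟨i, hi⟩ => ⟨i, hi⟩, fun ⟨i, hi⟩ => ⟨i, hi⟩⟩

lemma sum_over_sigma (σ : Finset (Fin n)) (hσ : σ.card = d + 1) (f : Fin n → K) :
    ∑ v ∈ σ, f v = ∑ k : Fin (d + 1), f (σ.orderEmbOfFin hσ k) := by
  conv_lhs => rw [← image_orderEmb σ hσ]
  exact Finset.sum_image (fun i _ j _ h => (σ.orderEmbOfFin hσ).injective h)

lemma card_filter_lt_vert (σ : Finset (Fin n)) (hσ : σ.card = d + 1) (k : Fin (d + 1)) :
    (σ.filter fun w => w < σ.orderEmbOfFin hσ k).card = (k : ℕ) := by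
  classical
  have himg : σ.filter (fun w => w < σ.orderEmbOfFin hσ k)
      = Finset.image (σ.orderEmbOfFin hσ) (Finset.univ.filter fun i => i < k) := by
    ext w
    simp only [Finset.mem_filter, Finset.mem_image, Finset.mem_univ, true_and]
    constructor
    · rintro ⟨hw, hlt⟩
      obtain ⟨i, rfl⟩ : ∃ i, σ.orderEmbOfFin hσ i = w := by
        have hr := Finset.range_orderEmbOfFin σ hσ
        have hw' : w ∈ (↑σ : Set (Fin n)) := hw
        rw [← hr] at hw'
        exact hw'
      exact ⟨i, (σ.orderEmbOfFin hσ).lt_iff_lt.mp hlt, rfl⟩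
    · rintro ⟨i, hik, rfl⟩
      exact ⟨Finset.orderEmbOfFin_mem σ hσ i, (σ.orderEmbOfFin hσ).lt_iff_lt.mpr hik⟩
  rw [himg, Finset.card_image_of_injective _ (σ.orderEmbOfFin hσ).injective]
  have h2 : Finset.image Fin.val (Finset.univ.filter fun i : Fin (d + 1) => i < k)
      = Finset.range (k : ℕ) := by
    ext m
    simp only [Finset.mem_image, Finset.mem_filter, Finset.mem_univ, true_and,
      Finset.mem_range]
    constructor
    · rintro ⟨i, hik, rfl⟩
      exact hik
    · intro hm
      exact ⟨⟨m, by omega⟩, by simpa [Fin.lt_def] using hm, rfl⟩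
  rw [← Finset.card_image_of_injective (Finset.univ.filter fun i : Fin (d + 1) => i < k)
    Fin.val_injective, h2, Finset.card_range]

lemma bdry_erase (σ : Finset (Fin n)) (hσ : σ.card = d + 1) (k : Fin (d + 1)) :
    bdryCoeff σ (σ.erase (σ.orderEmbOfFin hσ k)) = (-1) ^ (k : ℕ) := by
  classical
  rw [bdryCoeff, if_pos (Finset.erase_subset _ _)]
  have hsd : σ \ σ.erase (σ.orderEmbOfFin hσ k) = {σ.orderEmbOfFin hσ k} := by
    ext w
    simp only [Finset.mem_sdiff, Finset.mem_erase, Finset.mem_singleton]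
    constructor
    · rintro ⟨hw, hne⟩
      by_contra h
      exact hne ⟨h, hw⟩
    · rintro rfl
      exact ⟨Finset.orderEmbOfFin_mem σ hσ k, fun h => h.1 rfl⟩
  rw [hsd, Finset.sum_singleton, card_filter_lt_vert σ hσ k]

lemma sumC (σ : Finset (Fin n)) (hσ : σ.card = d + 1) (g : Finset (Fin n) → K) :
    ∑ τ ∈ Finset.powersetCard d (Finset.univ : Finset (Fin n)),
      ((bdryCoeff σ τ : ℤ) : K) * g τ
    = ∑ k : Fin (d + 1), (-1) ^ (k : ℕ) * g (σ.erase (σ.orderEmbOfFin hσ k)) := by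
  classical
  rw [← Finset.sum_filter_add_sum_filter_not (Finset.powersetCard d Finset.univ)
    (fun τ => τ ⊆ σ)]
  have hz : ∑ τ ∈ (Finset.powersetCard d (Finset.univ : Finset (Fin n))).filter
      (fun τ => ¬ τ ⊆ σ), ((bdryCoeff σ τ : ℤ) : K) * g τ = 0 := by
    apply Finset.sum_eq_zero
    intro τ hτ
    rw [Finset.mem_filter] at hτ
    rw [bdryCoeff, if_neg hτ.2]
    simp
  rw [hz, add_zero]
  refine (Finset.sum_bij (fun (k : Fin (d + 1)) _ => σ.erase (σ.orderEmbOfFin hσ k))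
    ?_ ?_ ?_ ?_).symm
  · intro k _
    rw [Finset.mem_filter, Finset.mem_powersetCard]
    exact ⟨⟨Finset.subset_univ _, card_erase σ hσ k⟩, Finset.erase_subset _ _⟩
  · intro k _ k' _ h
    have := (Finset.erase_inj σ (Finset.orderEmbOfFin_mem σ hσ k)).mp h
    exact (σ.orderEmbOfFin hσ).injective this
  · intro τ hτ
    rw [Finset.mem_filter, Finset.mem_powersetCard] at hτ
    obtain ⟨⟨-, hcard⟩, hsub⟩ := hτ
    have hne : τ ≠ σ := by
      intro h
      rw [h] at hcard
      omega
    obtain ⟨v, hvσ, hvτ⟩ := Finset.exists_of_ssubset (Finset.ssubset_iff_subset_ne.mpr ⟨hsub, hne⟩)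
    obtain ⟨k, rfl⟩ : ∃ k, σ.orderEmbOfFin hσ k = v := by
      have hr := Finset.range_orderEmbOfFin σ hσ
      have hv' : v ∈ (↑σ : Set (Fin n)) := hvσ
      rw [← hr] at hv'
      exact hv'
    refine ⟨k, Finset.mem_univ k, ?_⟩
    refine (Finset.eq_of_subset_of_card_le (Finset.subset_erase.mpr ⟨hsub, hvτ⟩) ?_).symm
    rw [card_erase σ hσ k, hcard]
  · intro k _
    rw [bdry_erase σ hσ k]
    push_cast
    ring

lemma phi_L_mul (Δ : Finset (Finset (Fin n)))
    (c : {σ // σ ∈ Δ.filter fun σ => σ.card = d + 1} → K)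
    (hc : ∀ τ : Finset (Fin n), τ.card = d →
      ∑ σ : {σ // σ ∈ Δ.filter fun σ => σ.card = d + 1},
        c σ * ((bdryCoeff σ.1 τ : ℤ) : K) = 0)
    (p : MvPolynomial (Fin n) K) :
    phi Δ c ((∑ i : Fin n, X i) * p) = 0 := by
  classical
  rw [phi_apply]
  have hstep : ∀ σ : {σ // σ ∈ Δ.filter fun σ => σ.card = d + 1},
      ∑ π : Equiv.Perm (Fin (d + 1)),
        (c σ * sgn K π) *
          coeff (expA σ.1 (Finset.mem_filter.mp σ.2).2 π) ((∑ i : Fin n, X i) * p)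
      = c σ * ∑ τ ∈ Finset.powersetCard d (Finset.univ : Finset (Fin n)),
          ((bdryCoeff σ.1 τ : ℤ) : K) * Gv d p τ := by
    intro σ
    set hσ : σ.1.card = d + 1 := (Finset.mem_filter.mp σ.2).2 with hhσ
    have hcoeff : ∀ π : Equiv.Perm (Fin (d + 1)),
        coeff (expA σ.1 hσ π) ((∑ i : Fin n, X i) * p)
        = ∑ k : Fin (d + 1), coeff (expB σ.1 hσ k π) p := by
      intro π
      rw [Finset.sum_mul, coeff_sum]
      have hzero : ∀ v ∈ (Finset.univ : Finset (Fin n)), v ∉ σ.1 →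
          coeff (expA σ.1 hσ π) (X v * p) = 0 := by
        intro v _ hv
        rw [coeff_X_mul', if_neg]
        intro hmem
        exact (Finsupp.mem_support_iff.mp hmem) (expA_apply_not_mem σ.1 hσ π hv)
      rw [← Finset.sum_subset (Finset.subset_univ σ.1) hzero]
      rw [sum_over_sigma σ.1 hσ]
      apply Finset.sum_congr rfl
      intro k _
      rw [expA_eq_expB_add σ.1 hσ k π, add_comm, coeff_X_mul]
    calc ∑ π : Equiv.Perm (Fin (d + 1)),
          (c σ * sgn K π) * coeff (expA σ.1 hσ π) ((∑ i : Fin n, X i) * p)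
        = ∑ π : Equiv.Perm (Fin (d + 1)), ∑ k : Fin (d + 1),
            (c σ * sgn K π) * coeff (expB σ.1 hσ k π) p := by
          apply Finset.sum_congr rfl
          intro π _
          rw [hcoeff π, Finset.mul_sum]
      _ = ∑ k : Fin (d + 1), ∑ π : Equiv.Perm (Fin (d + 1)),
            (c σ * sgn K π) * coeff (expB σ.1 hσ k π) p := Finset.sum_comm
      _ = c σ * ∑ k : Fin (d + 1), ∑ π : Equiv.Perm (Fin (d + 1)),
            sgn K π * coeff (expB σ.1 hσ k π) p := by
          rw [Finset.mul_sum]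
          apply Finset.sum_congr rfl
          intro k _
          rw [Finset.mul_sum]
          apply Finset.sum_congr rfl
          intro π _
          ring
      _ = c σ * ∑ τ ∈ Finset.powersetCard d (Finset.univ : Finset (Fin n)),
            ((bdryCoeff σ.1 τ : ℤ) : K) * Gv d p τ := by
          congr 1
          have hsplit : ∑ k : Fin (d + 1), ∑ π : Equiv.Perm (Fin (d + 1)),
              sgn K π * coeff (expB σ.1 hσ k π) p
            = (∑ k : Fin (d + 1), ∑ π ∈ Finset.univ.filter
                  (fun π : Equiv.Perm (Fin (d + 1)) => π k = 0),
                sgn K π * coeff (expB σ.1 hσ k π) p)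
              + ∑ k : Fin (d + 1), ∑ π ∈ Finset.univ.filter
                  (fun π : Equiv.Perm (Fin (d + 1)) => ¬ π k = 0),
                sgn K π * coeff (expB σ.1 hσ k π) p := by
            rw [← Finset.sum_add_distrib]
            apply Finset.sum_congr rfl
            intro k _
            exact (Finset.sum_filter_add_sum_filter_not _ _ _).symm
          have hB : ∑ k : Fin (d + 1), ∑ π ∈ Finset.univ.filter
                (fun π : Equiv.Perm (Fin (d + 1)) => ¬ π k = 0),
              sgn K π * coeff (expB σ.1 hσ k π) p = 0 := by
            calc ∑ k : Fin (d + 1), ∑ π ∈ Finset.univ.filter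
                    (fun π : Equiv.Perm (Fin (d + 1)) => ¬ π k = 0),
                  sgn K π * coeff (expB σ.1 hσ k π) p
                = ∑ k : Fin (d + 1), ∑ π : Equiv.Perm (Fin (d + 1)),
                    if ¬ π k = 0 then sgn K π * coeff (expB σ.1 hσ k π) p else 0 := by
                  apply Finset.sum_congr rfl
                  intro k _
                  rw [Finset.sum_filter]
              _ = ∑ q ∈ (Finset.univ ×ˢ Finset.univ :
                    Finset (Fin (d + 1) × Equiv.Perm (Fin (d + 1)))),
                    if ¬ q.2 q.1 = 0 then sgn K q.2 * coeff (expB σ.1 hσ q.1 q.2) p else 0 := by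
                  rw [Finset.sum_product]
              _ = ∑ q ∈ (Finset.univ ×ˢ Finset.univ).filter
                    (fun q : Fin (d + 1) × Equiv.Perm (Fin (d + 1)) => ¬ q.2 q.1 = 0),
                    sgn K q.2 * coeff (expB σ.1 hσ q.1 q.2) p := (Finset.sum_filter _ _).symm
              _ = 0 := sumA σ.1 hσ p
          have hA : ∑ k : Fin (d + 1), ∑ π ∈ Finset.univ.filter
                (fun π : Equiv.Perm (Fin (d + 1)) => π k = 0),
              sgn K π * coeff (expB σ.1 hσ k π) p
            = ∑ τ ∈ Finset.powersetCard d (Finset.univ : Finset (Fin n)),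
                ((bdryCoeff σ.1 τ : ℤ) : K) * Gv d p τ := by
            rw [sumC σ.1 hσ (Gv d p)]
            apply Finset.sum_congr rfl
            intro k _
            exact sumB σ.1 hσ k p
          rw [hsplit, hB, add_zero, hA]
  calc ∑ σ : {σ // σ ∈ Δ.filter fun σ => σ.card = d + 1},
        ∑ π : Equiv.Perm (Fin (d + 1)),
          (c σ * sgn K π) *
            coeff (expA σ.1 (Finset.mem_filter.mp σ.2).2 π) ((∑ i : Fin n, X i) * p)
      = ∑ σ : {σ // σ ∈ Δ.filter fun σ => σ.card = d + 1},
          c σ * ∑ τ ∈ Finset.powersetCard d (Finset.univ : Finset (Fin n)),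
            ((bdryCoeff σ.1 τ : ℤ) : K) * Gv d p τ :=
        Finset.sum_congr rfl (fun σ _ => hstep σ)
    _ = ∑ τ ∈ Finset.powersetCard d (Finset.univ : Finset (Fin n)),
          (∑ σ : {σ // σ ∈ Δ.filter fun σ => σ.card = d + 1},
            c σ * ((bdryCoeff σ.1 τ : ℤ) : K)) * Gv d p τ := by
        calc ∑ σ : {σ // σ ∈ Δ.filter fun σ => σ.card = d + 1},
              c σ * ∑ τ ∈ Finset.powersetCard d (Finset.univ : Finset (Fin n)),
                ((bdryCoeff σ.1 τ : ℤ) : K) * Gv d p τ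
            = ∑ σ : {σ // σ ∈ Δ.filter fun σ => σ.card = d + 1},
                ∑ τ ∈ Finset.powersetCard d (Finset.univ : Finset (Fin n)),
                  c σ * (((bdryCoeff σ.1 τ : ℤ) : K) * Gv d p τ) := by
              apply Finset.sum_congr rfl
              intro σ _
              rw [Finset.mul_sum]
          _ = ∑ τ ∈ Finset.powersetCard d (Finset.univ : Finset (Fin n)),
                ∑ σ : {σ // σ ∈ Δ.filter fun σ => σ.card = d + 1},
                  c σ * (((bdryCoeff σ.1 τ : ℤ) : K) * Gv d p τ) := Finset.sum_comm
          _ = ∑ τ ∈ Finset.powersetCard d (Finset.univ : Finset (Fin n)),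
                (∑ σ : {σ // σ ∈ Δ.filter fun σ => σ.card = d + 1},
                  c σ * ((bdryCoeff σ.1 τ : ℤ) : K)) * Gv d p τ := by
              apply Finset.sum_congr rfl
              intro τ _
              rw [Finset.sum_mul]
              apply Finset.sum_congr rfl
              intro σ _
              ring
    _ = 0 := by
        apply Finset.sum_eq_zero
        intro τ hτ
        rw [hc τ (Finset.mem_powersetCard.mp hτ).2, zero_mul]

lemma degree_expA_one (σ : Finset (Fin n)) (hσ : σ.card = d + 1) :
    (expA σ hσ 1).degree = (d + 2).choose 2 := by
  classical
  have h1 : (expA σ hσ 1).degree = Finsupp.weight 1 (expA σ hσ 1) := by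
    rw [Finsupp.degree_eq_weight_one]
    rfl
  rw [h1, expA, map_sum]
  have h2 : ∀ i : Fin (d + 1),
      Finsupp.weight 1 (Finsupp.single (σ.orderEmbOfFin hσ i)
        (((1 : Equiv.Perm (Fin (d + 1))) i : ℕ) + 1)) = (i : ℕ) + 1 := by
    intro i
    rw [Finsupp.weight_apply, Finsupp.sum_single_index]
    · simp
    · simp
  rw [Finset.sum_congr rfl (fun i _ => h2 i)]
  have h3 : ∑ i : Fin (d + 1), ((i : ℕ) + 1) = ∑ j ∈ Finset.range (d + 2), j := by
    rw [Fin.sum_univ_eq_sum_range (fun j => j + 1) (d + 1)]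
    conv_rhs => rw [Finset.sum_range_succ' (fun j => j) (d + 1)]
    simp
  have h4 := Finset.sum_range_id_mul_two (d + 2)
  have h5 : (d + 2).choose 2 = (d + 2) * (d + 2 - 1) / 2 := Nat.choose_two_right (d + 2)
  rw [h3]
  omega

end Stmt15

/-- let `d ≥ 1` and `Δ` a `d`-dimensional simplicial complex on `n`
vertices with `H̃_d(Δ; K) ≠ 0` (i.e. there is a nonzero top cycle), and let
`J = I_Δ + (x_1^{d+2}, …, x_n^{d+2})`, `L = x_1 + ⋯ + x_n`.  Then the multiplication map
`×L : (R/J)_{C(d+2,2)-1} → (R/J)_{C(d+2,2)}` is not surjective. -/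
theorem stmt15 (K : Type*) [Field K] (n d : ℕ) (hd : 1 ≤ d)
    (Δ : Finset (Finset (Fin n)))
    (hdown : ∀ σ ∈ Δ, ∀ τ ⊆ σ, τ ∈ Δ)
    (hdim : ∀ σ ∈ Δ, σ.card ≤ d + 1)
    (hcyc : ∃ c : {σ // σ ∈ Δ.filter fun σ => σ.card = d + 1} → K, c ≠ 0 ∧
      ∀ τ : Finset (Fin n), τ.card = d →
        ∑ σ : {σ // σ ∈ Δ.filter fun σ => σ.card = d + 1},
          c σ * ((bdryCoeff σ.1 τ : ℤ) : K) = 0) :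
    ¬ (∀ q ∈ quotPiece K
          (SRIdeal K n Δ ⊔
            Ideal.span (Set.range fun i : Fin n => (X i : MvPolynomial (Fin n) K) ^ (d + 2)))
          ((d + 2).choose 2),
        ∃ p ∈ quotPiece K
          (SRIdeal K n Δ ⊔
            Ideal.span (Set.range fun i : Fin n => (X i : MvPolynomial (Fin n) K) ^ (d + 2)))
          ((d + 2).choose 2 - 1),
          Ideal.Quotient.mk
            (SRIdeal K n Δ ⊔
              Ideal.span (Set.range fun i : Fin n => (X i : MvPolynomial (Fin n) K) ^ (d + 2)))
            (∑ i : Fin n, X i) * p = q) := by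
  classical
  obtain ⟨c, hc0, hcyc'⟩ := hcyc
  obtain ⟨σ₀, hσ₀⟩ := Function.ne_iff.mp hc0
  rw [Pi.zero_apply] at hσ₀
  intro hsurj
  set J : Ideal (MvPolynomial (Fin n) K) := SRIdeal K n Δ ⊔
    Ideal.span (Set.range fun i : Fin n => (X i : MvPolynomial (Fin n) K) ^ (d + 2)) with hJ
  set h₀ : MvPolynomial (Fin n) K :=
    monomial (Stmt15.expA σ₀.1 (Finset.mem_filter.mp σ₀.2).2 1) (1 : K) with hh₀
  have hhom : h₀ ∈ homogeneousSubmodule (Fin n) K ((d + 2).choose 2) := by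
    rw [mem_homogeneousSubmodule]
    exact isHomogeneous_monomial 1 (Stmt15.degree_expA_one σ₀.1 _)
  have hq : Ideal.Quotient.mk J h₀ ∈ quotPiece K J ((d + 2).choose 2) :=
    Submodule.mem_map.mpr ⟨h₀, hhom, rfl⟩
  obtain ⟨pq, hpq, heq⟩ := hsurj (Ideal.Quotient.mk J h₀) hq
  obtain ⟨p', hp', rfl⟩ := Submodule.mem_map.mp hpq
  have heq2 : Ideal.Quotient.mk J ((∑ i : Fin n, X i) * p') = Ideal.Quotient.mk J h₀ := by
    rw [map_mul]
    exact heq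
  have hmem : (∑ i : Fin n, X i) * p' - h₀ ∈ J := Ideal.Quotient.eq.mp heq2
  have h1 : Stmt15.phi Δ c ((∑ i : Fin n, X i) * p' - h₀) = 0 :=
    Stmt15.phi_ideal Δ c hdown hmem
  have h2 : Stmt15.phi Δ c ((∑ i : Fin n, X i) * p') = 0 := Stmt15.phi_L_mul Δ c hcyc' p'
  have h3 : Stmt15.phi Δ c h₀ = c σ₀ := Stmt15.phi_monomial Δ c σ₀
  rw [map_sub, h2, h3] at h1
  apply hσ₀
  rwa [zero_sub, neg_eq_zero] at h1
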